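/- Let (X; τ, ≤) be a Priestley space and suppose x ∈ X is the greatest lower bound of a strictly decreasing sequence (x_i)_{i<ω} (so x_i < x_j for j < i). Then x is an accumulation point of {x_i : i < ω} in τ; in particular x lies in the closure of {x_i : i < ω} ∖ {x}. -/

import Mathlib

/-- The interval topology on a poset: generated by the subbase of complements of
principal down-sets `(x] = Set.Iic x` and principal up-sets `[x) = Set.Ici x`. -/
def intervalTopology (X : Type*) [Preorder X] : TopologicalSpace X :=
  TopologicalSpace.generateFrom
    ({S | ∃ x : X, S = (Set.Iic x)ᶜ} ∪ {S | ∃ x : X, S = (Set.Ici x)ᶜ})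

/-- A Priestley space: a poset with a compact topology which is totally
order-disconnected, i.e. whenever `x ≱ y` there is a clopen down-set containing `x`
but not `y`. -/
def IsPriestley (X : Type*) [TopologicalSpace X] [Preorder X] : Prop :=
  CompactSpace X ∧
    ∀ x y : X, ¬ y ≤ x → ∃ U : Set X, IsClopen U ∧ IsLowerSet U ∧ x ∈ U ∧ y ∉ U

/-- In a Priestley space, principal down-sets are closed. -/
lemma isClosed_Iic_of_isPriestley {X : Type*} [TopologicalSpace X] [PartialOrder X]
    (h : IsPriestley X) (z : X) : IsClosed (Set.Iic z) := by
  rw [← isOpen_compl_iff, isOpen_iff_forall_mem_open]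
  intro w hw
  obtain ⟨U, hUc, hUl, hzU, hwU⟩ := h.2 z w hw
  refine ⟨Uᶜ, ?_, hUc.1.isOpen_compl, hwU⟩
  intro a ha
  exact fun haz => ha (hUl haz hzU)

/-- In a Priestley space, if `x` is the greatest lower bound of a strictly decreasing
sequence `(x_i)` (so `x_i < x_j` for `j < i`), then `x` is an accumulation point of
`{x_i : i < ω}`; in particular `x` lies in the closure of `{x_i} \ {x}`. -/
theorem priestley_glb_accPt {X : Type*} [TopologicalSpace X] [PartialOrder X]
    (h : IsPriestley X) (x : X) (xs : ℕ → X)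
    (hdec : ∀ i j : ℕ, j < i → xs i < xs j)
    (hglb : IsGLB (Set.range xs) x) :
    AccPt x (Filter.principal (Set.range xs)) ∧
      x ∈ closure (Set.range xs \ {x}) := by
  haveI : CompactSpace X := h.1
  have hxlt : ∀ i, x < xs i := fun i =>
    lt_of_le_of_lt (hglb.1 ⟨i + 1, rfl⟩) (hdec (i + 1) i (Nat.lt_succ_self i))
  set K : ℕ → Set X := fun n => closure (xs '' Set.Ici n) with hK
  have hKsub : ∀ n, K (n + 1) ⊆ K n :=
    fun n => closure_mono (Set.image_mono (f := xs) fun i hi => le_trans (Nat.le_succ n) hi)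
  have hKne : ∀ n, (K n).Nonempty :=
    fun n => ⟨xs n, subset_closure ⟨n, le_refl n, rfl⟩⟩
  have hKcl : ∀ n, IsClosed (K n) := fun n => isClosed_closure
  obtain ⟨y, hy⟩ := IsCompact.nonempty_iInter_of_sequence_nonempty_isCompact_isClosed
    K hKsub hKne ((hKcl 0).isCompact) hKcl
  simp only [Set.mem_iInter] at hy
  -- y is a lower bound of the range
  have hylb : y ∈ lowerBounds (Set.range xs) := by
    rintro _ ⟨n, rfl⟩
    have hsub : K (n + 1) ⊆ Set.Iic (xs n) := by
      apply closure_minimal _ (isClosed_Iic_of_isPriestley h (xs n))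
      rintro _ ⟨i, hi, rfl⟩
      exact le_of_lt (hdec i n (Nat.lt_of_succ_le hi))
    exact hsub (hy (n + 1))
  have hyx : y ≤ x := hglb.2 hylb
  -- x ≤ y by Priestley separation
  have hxy : x ≤ y := by
    by_contra hxy
    obtain ⟨V, hVc, hVl, hyV, hxV⟩ := h.2 y x hxy
    have hsub : K 0 ⊆ Vᶜ := by
      apply closure_minimal _ hVc.2.isClosed_compl
      rintro _ ⟨i, _, rfl⟩ hmem
      exact hxV (hVl (le_of_lt (hxlt i)) hmem)
    exact hsub (hy 0) hyV
  have hxeq : y = x := le_antisymm hyx hxy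
  -- x ∈ closure (range xs \ {x})
  have hcl : x ∈ closure (Set.range xs \ {x}) := by
    have : K 1 ⊆ closure (Set.range xs \ {x}) := by
      apply closure_mono
      rintro _ ⟨i, _, rfl⟩
      exact ⟨⟨i, rfl⟩, fun heq => absurd heq.symm (ne_of_lt (hxlt i))⟩
    exact this (hxeq ▸ hy 1)
  refine ⟨?_, hcl⟩
  rw [accPt_iff_nhds]
  intro U hU
  obtain ⟨z, hz⟩ := mem_closure_iff_nhds.1 hcl U hU
  exact ⟨z, ⟨hz.1, hz.2.1⟩, hz.2.2⟩
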